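/- Let j ≥ 1 be an integer, let λ ≥ 1 and μ ≥ 1 be real numbers, and let s ≤ 0. For a : Ż_λ → ℂ define b : Ż_{λμ} → ℂ by b(κ) = μ^{−2j}·a(μκ) (note that μκ ∈ Ż_λ whenever κ ∈ Ż_{λμ}). Then ‖b‖_{H^s_{λμ}} ≤ μ^{−2j+1/2−s}·‖a‖_{H^s_λ}. -/

import Mathlib

open scoped ENNReal

noncomputable section

/-- Japanese bracket `⟨x⟩ = (1+x²)^{1/2}`. -/
def jap (x : ℝ) : ℝ := Real.sqrt (1 + x ^ 2)

/-- `H^s_λ` norm of a Fourier-coefficient function `a` on `Ż_λ = {m/λ : m ∈ ℤ, m ≠ 0}`: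
`‖a‖_{H^s_λ} = ((1/λ) Σ_{k∈Ż_λ} ⟨k⟩^{2s} |a(k)|²)^{1/2}`. -/
def HsN (lam s : ℝ) (a : ℝ → ℂ) : ℝ≥0∞ :=
  (ENNReal.ofReal (1 / lam) * ∑' m : ℤ, if m = 0 then 0 else
    ENNReal.ofReal (jap ((m : ℝ) / lam) ^ (2 * s)) *
      (‖a ((m : ℝ) / lam)‖₊ : ℝ≥0∞) ^ 2) ^ (1 / 2 : ℝ)

lemma jap_pos (x : ℝ) : 0 < jap x := Real.sqrt_pos.2 (by positivity)

lemma jap_scale {mu : ℝ} (hmu : 1 ≤ mu) {s : ℝ} (hs : s ≤ 0) (x : ℝ) :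
    jap (x / mu) ^ (2 * s) ≤ mu ^ (-(2 * s)) * jap x ^ (2 * s) := by
  have hmu0 : (0:ℝ) < mu := lt_of_lt_of_le one_pos hmu
  have h1 : jap x / mu ≤ jap (x / mu) := by
    rw [jap, jap, div_pow]
    have heq : Real.sqrt (1 + x ^ 2) / mu = Real.sqrt ((1 + x ^ 2) / mu ^ 2) := by
      rw [Real.sqrt_div (by positivity), Real.sqrt_sq hmu0.le]
    rw [heq]
    apply Real.sqrt_le_sqrt
    rw [add_div]
    have h2 : (1:ℝ) / mu ^ 2 ≤ 1 := by
      rw [div_le_one (by positivity)]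
      nlinarith
    linarith
  calc jap (x / mu) ^ (2 * s) ≤ (jap x / mu) ^ (2 * s) :=
        Real.rpow_le_rpow_of_nonpos (div_pos (jap_pos x) hmu0) h1 (by linarith)
    _ = mu ^ (-(2 * s)) * jap x ^ (2 * s) := by
        rw [Real.div_rpow (jap_pos x).le hmu0.le, Real.rpow_neg hmu0.le,
          div_eq_mul_inv, mul_comm]

/-- **Scaling estimate for Theorem 1.1:** for `j ≥ 1`, `λ, μ ≥ 1` and `s ≤ 0`, the scaled
coefficient function `b(κ) = μ^{−2j} a(μκ)` on `Ż_{λμ}` satisfies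
`‖b‖_{H^s_{λμ}} ≤ μ^{−2j+1/2−s} ‖a‖_{H^s_λ}`. -/
theorem stmt_19 (j : ℕ) (hj : 1 ≤ j) (lam mu : ℝ) (hlam : 1 ≤ lam) (hmu : 1 ≤ mu)
    (s : ℝ) (hs : s ≤ 0) (a : ℝ → ℂ) :
    HsN (lam * mu) s (fun κ => ((mu ^ (-(2 * (j : ℝ))) : ℝ) : ℂ) * a (mu * κ)) ≤
      ENNReal.ofReal (mu ^ (-2 * (j : ℝ) + 1 / 2 - s)) * HsN lam s a := by
  have hmu0 : (0:ℝ) < mu := lt_of_lt_of_le one_pos hmu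
  have hlam0 : (0:ℝ) < lam := lt_of_lt_of_le one_pos hlam
  set p : ℝ := -(2 * (j:ℝ)) with hp
  have hDpos : (0:ℝ) < 1 / mu * (mu ^ (-(2*s)) * (mu ^ p) ^ 2) := by positivity
  set Sa : ℝ≥0∞ := ∑' m : ℤ, if m = 0 then 0 else
    ENNReal.ofReal (jap ((m:ℝ)/lam) ^ (2*s)) * (‖a ((m:ℝ)/lam)‖₊ : ℝ≥0∞)^2 with hSa
  set K : ℝ≥0∞ := ENNReal.ofReal (mu ^ (-(2*s)) * (mu ^ p) ^ 2) with hK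
  have key : ∀ m : ℤ, (if m = 0 then 0 else
      ENNReal.ofReal (jap ((m:ℝ)/(lam*mu)) ^ (2*s)) *
        (‖((mu ^ p : ℝ):ℂ) * a (mu * ((m:ℝ)/(lam*mu)))‖₊ : ℝ≥0∞)^2)
      ≤ K * (if m = 0 then 0 else
      ENNReal.ofReal (jap ((m:ℝ)/lam) ^ (2*s)) * (‖a ((m:ℝ)/lam)‖₊ : ℝ≥0∞)^2) := by
    intro m
    by_cases hm : m = 0
    · simp [hm]
    · simp only [hm, if_false]
      have harg : mu * ((m:ℝ)/(lam*mu)) = (m:ℝ)/lam := by field_simp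
      have hdiv : (m:ℝ)/(lam*mu) = ((m:ℝ)/lam)/mu := by field_simp
      rw [harg, hdiv, nnnorm_mul, ENNReal.coe_mul, mul_pow]
      have hc : ((‖((mu ^ p : ℝ):ℂ)‖₊ : ℝ≥0∞))^2 = ENNReal.ofReal ((mu ^ p) ^ 2) := by
        rw [Complex.nnnorm_real, ← ENNReal.coe_pow, ← Real.enorm_eq_ofReal (by positivity), enorm_eq_nnnorm]
        norm_cast
        rw [← nnnorm_pow]
      rw [hc]
      calc ENNReal.ofReal (jap (((m:ℝ)/lam)/mu) ^ (2*s)) *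
            (ENNReal.ofReal ((mu ^ p) ^ 2) * (‖a ((m:ℝ)/lam)‖₊ : ℝ≥0∞)^2)
          ≤ ENNReal.ofReal (mu ^ (-(2*s)) * jap ((m:ℝ)/lam) ^ (2*s)) *
            (ENNReal.ofReal ((mu ^ p) ^ 2) * (‖a ((m:ℝ)/lam)‖₊ : ℝ≥0∞)^2) := by
            gcongr
            exact jap_scale hmu hs _
        _ = K * (ENNReal.ofReal (jap ((m:ℝ)/lam) ^ (2*s)) * (‖a ((m:ℝ)/lam)‖₊ : ℝ≥0∞)^2) := by
            rw [hK, ENNReal.ofReal_mul (by positivity), ENNReal.ofReal_mul (by positivity)]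
            ring
  have hsum : (∑' m : ℤ, if m = 0 then 0 else
      ENNReal.ofReal (jap ((m:ℝ)/(lam*mu)) ^ (2*s)) *
        (‖((mu ^ p : ℝ):ℂ) * a (mu * ((m:ℝ)/(lam*mu)))‖₊ : ℝ≥0∞)^2) ≤ K * Sa := by
    rw [hSa, ← ENNReal.tsum_mul_left]
    exact ENNReal.tsum_le_tsum key
  have hmain : HsN (lam * mu) s (fun κ => ((mu ^ p : ℝ) : ℂ) * a (mu * κ)) ≤
      (ENNReal.ofReal (1/(lam*mu)) * (K * Sa)) ^ (1/2 : ℝ) := by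
    unfold HsN
    apply ENNReal.rpow_le_rpow _ (by norm_num)
    exact mul_le_mul_right hsum _
  have hsplit : ENNReal.ofReal (1/(lam*mu)) * (K * Sa) =
      ENNReal.ofReal (1/mu * (mu ^ (-(2*s)) * (mu ^ p) ^ 2)) *
        (ENNReal.ofReal (1/lam) * Sa) := by
    rw [ENNReal.ofReal_mul (by positivity), hK,
      show (1:ℝ)/(lam*mu) = (1/mu) * (1/lam) by field_simp; try ring,
      ENNReal.ofReal_mul (by positivity)]
    ring
  rw [hsplit] at hmain
  have hfac : (ENNReal.ofReal (1/mu * (mu ^ (-(2*s)) * (mu ^ p) ^ 2)) *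
        (ENNReal.ofReal (1/lam) * Sa)) ^ (1/2 : ℝ) =
      ENNReal.ofReal ((1/mu * (mu ^ (-(2*s)) * (mu ^ p) ^ 2)) ^ (1/2 : ℝ)) *
        (ENNReal.ofReal (1/lam) * Sa) ^ (1/2 : ℝ) := by
    rw [ENNReal.mul_rpow_of_nonneg _ _ (by norm_num), ENNReal.ofReal_rpow_of_pos hDpos]
  rw [hfac] at hmain
  refine hmain.trans (mul_le_mul_left (ENNReal.ofReal_le_ofReal ?_) _)
  have hD : 1/mu * (mu ^ (-(2*s)) * (mu ^ p) ^ 2) = mu ^ (-1 + -(2*s) + 2*p) := by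
    rw [show ((mu:ℝ) ^ p) ^ 2 = mu ^ p * mu ^ p by ring, ← Real.rpow_add hmu0,
      one_div, ← Real.rpow_neg_one mu, ← Real.rpow_add hmu0, ← Real.rpow_add hmu0]
    ring_nf
  rw [hD, ← Real.rpow_mul hmu0.le]
  apply Real.rpow_le_rpow_of_exponent_le hmu
  rw [hp]
  push_cast
  nlinarith [(Nat.one_le_cast (α := ℝ)).mpr hj]

end
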